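/- Zero-loss iterated limit for softmax attention in the noiseless setting (Lemma 2, reduced form): Let H > 0 and A, B be reals with 1 ≤ A ≤ B ≤ H, let J be a finite index set and C_j ∈ [0, H] for each j ∈ J. Define D(λ) = A e^λ + (H − A) e^{−λ}, ξ_y(s, λ) = s (A e^λ + (B − A) e^{−λ}) / D(λ), and ξ_j(s, λ) = s C_j e^{−λ} / D(λ) for j ∈ J, and the loss ℓ(s, λ) = −ξ_y(s,λ) + ln( exp(ξ_y(s,λ)) + Σ_{j∈J} exp(ξ_j(s,λ)) ). Then for every fixed s ∈ ℝ, lim_{λ→∞} ℓ(s, λ) = ln(1 + |J| e^{−s}), and consequently lim_{s→∞} lim_{λ→∞} ℓ(s, λ) = 0. -/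

import Mathlib

open Filter Real

theorem stmt_8 (H A B : ℝ) (hH : 0 < H) (hA : 1 ≤ A) (hAB : A ≤ B) (hBH : B ≤ H)
    {J : Type*} [Fintype J] (C : J → ℝ) (hC : ∀ j, C j ∈ Set.Icc (0 : ℝ) H) :
    (∀ s : ℝ,
      Filter.Tendsto (fun lam : ℝ =>
          -(s * (A * Real.exp lam + (B - A) * Real.exp (-lam)) /
              (A * Real.exp lam + (H - A) * Real.exp (-lam))) +
          Real.log
            (Real.exp (s * (A * Real.exp lam + (B - A) * Real.exp (-lam)) /
                (A * Real.exp lam + (H - A) * Real.exp (-lam))) +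
              ∑ j : J, Real.exp (s * C j * Real.exp (-lam) /
                (A * Real.exp lam + (H - A) * Real.exp (-lam)))))
        Filter.atTop
        (nhds (Real.log (1 + (Fintype.card J : ℝ) * Real.exp (-s))))) ∧
    Filter.Tendsto (fun s : ℝ => Real.log (1 + (Fintype.card J : ℝ) * Real.exp (-s)))
      Filter.atTop (nhds 0) := by
  have hA0 : (0:ℝ) < A := lt_of_lt_of_le one_pos hA
  have hHA : (0:ℝ) ≤ H - A := by linarith
  have he : Tendsto (fun lam : ℝ => Real.exp (-lam)) atTop (nhds 0) :=
    Real.tendsto_exp_neg_atTop_nhds_zero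
  have hu : Tendsto (fun lam : ℝ => Real.exp (-lam) * Real.exp (-lam)) atTop (nhds 0) := by
    simpa using he.mul he
  constructor
  · intro s
    -- denominator positivity
    have hD : ∀ lam : ℝ, 0 < A * Real.exp lam + (H - A) * Real.exp (-lam) := fun lam =>
      add_pos_of_pos_of_nonneg (mul_pos hA0 (Real.exp_pos _))
        (mul_nonneg hHA (Real.exp_pos _).le)
    have hD2 : ∀ lam : ℝ, 0 < A + (H - A) * (Real.exp (-lam) * Real.exp (-lam)) := fun lam =>
      add_pos_of_pos_of_nonneg hA0
        (mul_nonneg hHA (mul_nonneg (Real.exp_pos _).le (Real.exp_pos _).le))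
    -- pointwise rewriting
    have hEq1 : ∀ lam : ℝ,
        s * (A * Real.exp lam + (B - A) * Real.exp (-lam)) /
          (A * Real.exp lam + (H - A) * Real.exp (-lam))
        = s * (A + (B - A) * (Real.exp (-lam) * Real.exp (-lam))) /
          (A + (H - A) * (Real.exp (-lam) * Real.exp (-lam))) := by
      intro lam
      have h1 : Real.exp lam * Real.exp (-lam) = 1 := by
        rw [← Real.exp_add]; simp
      rw [div_eq_div_iff (ne_of_gt (hD lam)) (ne_of_gt (hD2 lam))]
      linear_combination (s * A * (H - B) * Real.exp (-lam)) * h1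
    have hEq2 : ∀ (j : J) (lam : ℝ),
        s * C j * Real.exp (-lam) /
          (A * Real.exp lam + (H - A) * Real.exp (-lam))
        = s * C j * (Real.exp (-lam) * Real.exp (-lam)) /
          (A + (H - A) * (Real.exp (-lam) * Real.exp (-lam))) := by
      intro j lam
      have h1 : Real.exp lam * Real.exp (-lam) = 1 := by
        rw [← Real.exp_add]; simp
      rw [div_eq_div_iff (ne_of_gt (hD lam)) (ne_of_gt (hD2 lam))]
      linear_combination (-(s * C j * A * Real.exp (-lam))) * h1
    -- limits
    have hden : Tendsto (fun lam : ℝ =>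
        A + (H - A) * (Real.exp (-lam) * Real.exp (-lam))) atTop (nhds A) := by
      have := (tendsto_const_nhds (x := A)).add ((tendsto_const_nhds (x := H - A)).mul hu)
      simpa using this
    have hnum : Tendsto (fun lam : ℝ =>
        s * (A + (B - A) * (Real.exp (-lam) * Real.exp (-lam)))) atTop (nhds (s * A)) := by
      have := (tendsto_const_nhds (x := s)).mul
        ((tendsto_const_nhds (x := A)).add ((tendsto_const_nhds (x := B - A)).mul hu))
      simpa using this
    have hxi : Tendsto (fun lam : ℝ =>
        s * (A * Real.exp lam + (B - A) * Real.exp (-lam)) /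
          (A * Real.exp lam + (H - A) * Real.exp (-lam))) atTop (nhds s) := by
      have h := hnum.div hden (ne_of_gt hA0)
      have hs : s * A / A = s := by field_simp
      rw [hs] at h
      exact Tendsto.congr (fun lam => (hEq1 lam).symm) h
    have hxij : ∀ j : J, Tendsto (fun lam : ℝ =>
        s * C j * Real.exp (-lam) /
          (A * Real.exp lam + (H - A) * Real.exp (-lam))) atTop (nhds 0) := by
      intro j
      have hnumj : Tendsto (fun lam : ℝ =>
          s * C j * (Real.exp (-lam) * Real.exp (-lam))) atTop (nhds 0) := by
        simpa using (tendsto_const_nhds (x := s * C j)).mul hu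
      have h := hnumj.div hden (ne_of_gt hA0)
      rw [zero_div] at h
      exact Tendsto.congr (fun lam => (hEq2 j lam).symm) h
    -- sum
    have hsum : Tendsto (fun lam : ℝ =>
        ∑ j : J, Real.exp (s * C j * Real.exp (-lam) /
          (A * Real.exp lam + (H - A) * Real.exp (-lam)))) atTop
        (nhds (Fintype.card J : ℝ)) := by
      have h : Tendsto (fun lam : ℝ =>
          ∑ j : J, Real.exp (s * C j * Real.exp (-lam) /
            (A * Real.exp lam + (H - A) * Real.exp (-lam)))) atTop
          (nhds (∑ _j : J, Real.exp 0)) := by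
        exact tendsto_finset_sum _ (fun j _ =>
          (Real.continuous_exp.continuousAt.tendsto).comp (hxij j))
      simpa using h
    have hinner : Tendsto (fun lam : ℝ =>
        Real.exp (s * (A * Real.exp lam + (B - A) * Real.exp (-lam)) /
          (A * Real.exp lam + (H - A) * Real.exp (-lam))) +
        ∑ j : J, Real.exp (s * C j * Real.exp (-lam) /
          (A * Real.exp lam + (H - A) * Real.exp (-lam)))) atTop
        (nhds (Real.exp s + (Fintype.card J : ℝ))) :=
      ((Real.continuous_exp.continuousAt.tendsto).comp hxi).add hsum
    have hpos : 0 < Real.exp s + (Fintype.card J : ℝ) :=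
      add_pos_of_pos_of_nonneg (Real.exp_pos s) (Nat.cast_nonneg _)
    have hlog : Tendsto (fun lam : ℝ =>
        Real.log (Real.exp (s * (A * Real.exp lam + (B - A) * Real.exp (-lam)) /
          (A * Real.exp lam + (H - A) * Real.exp (-lam))) +
        ∑ j : J, Real.exp (s * C j * Real.exp (-lam) /
          (A * Real.exp lam + (H - A) * Real.exp (-lam))))) atTop
        (nhds (Real.log (Real.exp s + (Fintype.card J : ℝ)))) :=
      ((Real.continuousAt_log (ne_of_gt hpos)).tendsto).comp hinner
    have hfinal := (hxi.neg).add hlog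
    have hval : -s + Real.log (Real.exp s + (Fintype.card J : ℝ))
        = Real.log (1 + (Fintype.card J : ℝ) * Real.exp (-s)) := by
      have : (1 : ℝ) + (Fintype.card J : ℝ) * Real.exp (-s)
          = (Real.exp s + (Fintype.card J : ℝ)) * Real.exp (-s) := by
        rw [add_mul, ← Real.exp_add]
        norm_num [add_comm]
      rw [this, Real.log_mul (ne_of_gt hpos) (Real.exp_ne_zero _), Real.log_exp]
      ring
    rw [← hval]
    exact hfinal
  · have h : Tendsto (fun s : ℝ =>
        1 + (Fintype.card J : ℝ) * Real.exp (-s)) atTop (nhds 1) := by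
      have := (tendsto_const_nhds (x := (1:ℝ))).add
        ((tendsto_const_nhds (x := (Fintype.card J : ℝ))).mul
          Real.tendsto_exp_neg_atTop_nhds_zero)
      simpa using this
    have := ((Real.continuousAt_log (by norm_num)).tendsto).comp h
    simpa [Function.comp_def] using this
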